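/- Let β ∈ (0,1), σ₀ > 0, let (η_k)_{k≥0} and (η̂_k)_{k≥0} be sequences of positive reals with η₀ = σ₀, and let B ⊆ ℕ be a set of indices such that: η̂_k = η_k for k ∉ B; η̂_k ≤ β·η_k for k ∈ B; η_{k+1} = η̂_k/β for k ∉ B; and η_{k+1} = η̂_k for k ∈ B. Then for every N ≥ 1, Σ_{k=0}^{N−1} 1/η̂_k² ≤ (2−β²)/((1−β²)·σ₀²) + ((2−β²)/(1−β²))·Σ_{0 ≤ k ≤ N−1, k ∈ B} 1/η̂_k². -/

import Mathlib

/-- The sum of the inverse squared accepted step sizes is controlled by the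
contribution of the backtracking iterations (key inequality in Lemma 2 of the paper). -/
theorem stmt8
    (β σ₀ : ℝ) (hβ0 : 0 < β) (hβ1 : β < 1) (hσ₀ : 0 < σ₀)
    (η ηh : ℕ → ℝ) (hη0 : η 0 = σ₀)
    (hηpos : ∀ k, 0 < η k) (hηhpos : ∀ k, 0 < ηh k)
    (B : Set ℕ) [DecidablePred (· ∈ B)]
    (heq : ∀ k ∉ B, ηh k = η k) (hle : ∀ k ∈ B, ηh k ≤ β * η k)
    (hnext1 : ∀ k ∉ B, η (k + 1) = ηh k / β)
    (hnext2 : ∀ k ∈ B, η (k + 1) = ηh k)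
    (N : ℕ) (hN : 1 ≤ N) :
    ∑ k ∈ Finset.range N, 1 / (ηh k) ^ 2
      ≤ (2 - β ^ 2) / ((1 - β ^ 2) * σ₀ ^ 2)
        + ((2 - β ^ 2) / (1 - β ^ 2)) *
            ∑ k ∈ (Finset.range N).filter (fun k => k ∈ B), 1 / (ηh k) ^ 2 := by
  have hc : (0:ℝ) < 1 - β ^ 2 := by nlinarith
  set c := 1 - β ^ 2 with hcdef
  -- key invariant
  have key : ∀ M : ℕ,
      (∑ k ∈ (Finset.range M).filter (fun k => k ∉ B), 1 / (η k) ^ 2)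
        + 1 / (η M) ^ 2 / c
      ≤ 1 / σ₀ ^ 2 / c
        + (1 / c) * ∑ k ∈ (Finset.range M).filter (fun k => k ∈ B), 1 / (ηh k) ^ 2 := by
    intro M
    induction M with
    | zero => simp [hη0]
    | succ M ih =>
      rw [Finset.range_add_one, Finset.filter_insert, Finset.filter_insert]
      by_cases hM : M ∈ B
      · rw [if_neg (by simpa using hM), if_pos hM,
          Finset.sum_insert (by simp)]
        have hnext := hnext2 M hM
        have haM : 0 < 1 / (η M) ^ 2 / c :=
          div_pos (div_pos one_pos (pow_pos (hηpos M) 2)) hc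
        rw [hnext, mul_add]
        have : (1:ℝ) / c * (1 / ηh M ^ 2) = 1 / ηh M ^ 2 / c := by ring
        linarith [ih]
      · rw [if_pos hM, if_neg hM, Finset.sum_insert (by simp)]
        have hnext := hnext1 M hM
        have heqM := heq M hM
        have hηM := (hηpos M).ne'
        have hβne := hβ0.ne'
        have hstep : 1 / (η (M+1)) ^ 2 / c = 1 / (η M) ^ 2 / c - 1 / (η M) ^ 2 := by
          rw [hnext, heqM]
          field_simp
          ring
        rw [hstep]
        linarith [ih]
  -- split the sum
  have hsplit := Finset.sum_filter_add_sum_filter_not (Finset.range N)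
    (fun k => k ∈ B) (fun k => 1 / (ηh k) ^ 2)
  have hnotB : ∑ k ∈ (Finset.range N).filter (fun k => k ∉ B), 1 / (ηh k) ^ 2
      = ∑ k ∈ (Finset.range N).filter (fun k => k ∉ B), 1 / (η k) ^ 2 := by
    apply Finset.sum_congr rfl
    intro k hk
    rw [heq k (Finset.mem_filter.mp hk).2]
  have hkey := key N
  have haN : 0 < 1 / (η N) ^ 2 / c :=
    div_pos (div_pos one_pos (pow_pos (hηpos N) 2)) hc
  have hBsum : 0 ≤ ∑ k ∈ (Finset.range N).filter (fun k => k ∈ B), 1 / (ηh k) ^ 2 :=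
    Finset.sum_nonneg fun k _ => by positivity
  have h1 : (2 - β ^ 2) / (c * σ₀ ^ 2) = 1 / σ₀ ^ 2 / c + 1 / σ₀ ^ 2 := by
    rw [hcdef]; field_simp [show (1:ℝ) - β ^ 2 ≠ 0 from hc.ne']; ring
  have h2 : (2 - β ^ 2) / c = 1 / c + 1 := by
    rw [hcdef]; field_simp [show (1:ℝ) - β ^ 2 ≠ 0 from hc.ne']; ring
  have hσ : 0 < 1 / σ₀ ^ 2 := by positivity
  rw [← hsplit, hnotB, h1, h2]
  have hfinal : 1 / σ₀ ^ 2 ≤ 1 / σ₀ ^ 2 := le_refl _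
  nlinarith [hkey, haN, hBsum, hσ]
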